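/- arXiv:1910.11053 — 2 statements merged into one kernel-verified Lean document; each statement's English description precedes it below -/
import Mathlib

section
/- Let Σ = (A,B,C,D; X,U,Y) be a passive system and Σ₁ = (A₁,B₁,C₁,D₁; X₁,U,Y) an isometric system (T₁*∘T₁ = I) on complex Hilbert spaces, realizing the same transfer function, i.e. D = D₁ and C∘Aⁿ∘B = C₁∘A₁ⁿ∘B₁ for all n ≥ 0. Then for every n ≥ 0 and all u₀,…,uₙ ∈ U: ‖∑_{k=0}^{n} Aᵏ(B uₖ)‖ ≤ ‖∑_{k=0}^{n} A₁ᵏ(B₁ uₖ)‖. -/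
/-!
STATEMENT 8: If Σ = (A,B,C,D;X,U,Y) is passive and Σ₁ = (A₁,B₁,C₁,D₁;X₁,U,Y) is
isometric, and they realize the same transfer function (D = D₁ and CAⁿB = C₁A₁ⁿB₁
for all n), then ‖∑ₖ Aᵏ(Buₖ)‖ ≤ ‖∑ₖ A₁ᵏ(B₁uₖ)‖ for all finite families uₖ in U.
-/

noncomputable section

open ContinuousLinearMap

variable {X X₁ U Y : Type*}
  [NormedAddCommGroup X] [InnerProductSpace ℂ X] [CompleteSpace X]
  [NormedAddCommGroup X₁] [InnerProductSpace ℂ X₁] [CompleteSpace X₁]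
  [NormedAddCommGroup U] [InnerProductSpace ℂ U] [CompleteSpace U]
  [NormedAddCommGroup Y] [InnerProductSpace ℂ Y] [CompleteSpace Y]

/-- The system operator `T(x,u) = (Ax + Bu, Cx + Du)` as a block operator between the
Hilbert space direct sums. -/
def sysOp {W : Type*} [NormedAddCommGroup W] [InnerProductSpace ℂ W] [CompleteSpace W]
    (A : W →L[ℂ] W) (B : U →L[ℂ] W) (C : W →L[ℂ] Y) (D : U →L[ℂ] Y) :
    WithLp 2 (W × U) →L[ℂ] WithLp 2 (W × Y) :=
  (((WithLp.prodContinuousLinearEquiv 2 ℂ W Y).symm : (W × Y) →L[ℂ] WithLp 2 (W × Y)).comp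
      ((A.comp (fst ℂ W U) + B.comp (snd ℂ W U)).prod
        (C.comp (fst ℂ W U) + D.comp (snd ℂ W U)))).comp
    ((WithLp.prodContinuousLinearEquiv 2 ℂ W U : WithLp 2 (W × U) →L[ℂ] (W × U)))

lemma aux_norm_sq {α β : Type*} [NormedAddCommGroup α] [NormedAddCommGroup β] (a : α) (b : β) :
    ‖(WithLp.equiv 2 (α × β)).symm (a, b)‖ ^ 2 = ‖a‖ ^ 2 + ‖b‖ ^ 2 := by
  rw [WithLp.prod_norm_sq_eq_of_L2]; rfl

lemma sysOp_apply' {W : Type*} [NormedAddCommGroup W] [InnerProductSpace ℂ W] [CompleteSpace W]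
    (A : W →L[ℂ] W) (B : U →L[ℂ] W) (C : W →L[ℂ] Y) (D : U →L[ℂ] Y) (x : W) (v : U) :
    sysOp A B C D ((WithLp.equiv 2 (W × U)).symm (x, v))
      = (WithLp.equiv 2 (W × Y)).symm (A x + B v, C x + D v) := by
  simp [sysOp]

lemma passive_step {W : Type*} [NormedAddCommGroup W] [InnerProductSpace ℂ W] [CompleteSpace W]
    (A : W →L[ℂ] W) (B : U →L[ℂ] W) (C : W →L[ℂ] Y) (D : U →L[ℂ] Y)
    (hpass : ‖sysOp A B C D‖ ≤ 1) (x : W) (v : U) :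
    ‖A x + B v‖ ^ 2 + ‖C x + D v‖ ^ 2 ≤ ‖x‖ ^ 2 + ‖v‖ ^ 2 := by
  set p : WithLp 2 (W × U) := (WithLp.equiv 2 (W × U)).symm (x, v) with hp
  have h1 : ‖sysOp A B C D p‖ ≤ ‖p‖ := by
    calc ‖sysOp A B C D p‖ ≤ ‖sysOp A B C D‖ * ‖p‖ := (sysOp A B C D).le_opNorm p
    _ ≤ 1 * ‖p‖ := by
        exact mul_le_mul_of_nonneg_right hpass (norm_nonneg _)
    _ = ‖p‖ := one_mul _
  have h2 : ‖sysOp A B C D p‖ ^ 2 ≤ ‖p‖ ^ 2 := by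
    exact pow_le_pow_left₀ (norm_nonneg _) h1 2
  rw [hp, sysOp_apply', aux_norm_sq, aux_norm_sq] at h2
  exact h2

lemma iso_step {W : Type*} [NormedAddCommGroup W] [InnerProductSpace ℂ W] [CompleteSpace W]
    (A : W →L[ℂ] W) (B : U →L[ℂ] W) (C : W →L[ℂ] Y) (D : U →L[ℂ] Y)
    (hiso : (ContinuousLinearMap.adjoint (sysOp A B C D)).comp (sysOp A B C D)
      = ContinuousLinearMap.id ℂ (WithLp 2 (W × U))) (x : W) (v : U) :
    ‖A x + B v‖ ^ 2 + ‖C x + D v‖ ^ 2 = ‖x‖ ^ 2 + ‖v‖ ^ 2 := by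
  set T := sysOp A B C D with hT
  set p : WithLp 2 (W × U) := (WithLp.equiv 2 (W × U)).symm (x, v) with hp
  have hin : (inner ℂ (T p) (T p) : ℂ) = inner ℂ p p := by
    calc (inner ℂ (T p) (T p) : ℂ)
        = inner ℂ ((ContinuousLinearMap.adjoint T) (T p)) p :=
          (ContinuousLinearMap.adjoint_inner_left T p (T p)).symm
      _ = inner ℂ (((ContinuousLinearMap.adjoint T).comp T) p) p := rfl
      _ = inner ℂ p p := by rw [hiso]; rfl
  rw [inner_self_eq_norm_sq_to_K, inner_self_eq_norm_sq_to_K] at hin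
  have h2 : ‖T p‖ ^ 2 = ‖p‖ ^ 2 := by exact_mod_cast hin
  rw [hT, hp, sysOp_apply', aux_norm_sq, aux_norm_sq] at h2
  exact h2

lemma key_sum {Z : Type*} [NormedAddCommGroup Z] [NormedSpace ℂ Z]
    (A' : Z →L[ℂ] Z) (B' : U →L[ℂ] Z) (w : ℕ → U) (n : ℕ) (z : ℕ → Z)
    (hz0 : z 0 = 0) (hzs : ∀ j, z (j + 1) = A' (z j) + B' (w (n - j))) :
    ∀ j, j ≤ n + 1 → z j = ∑ k ∈ Finset.range j, (A' ^ k) (B' (w (n + 1 - j + k))) := by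
  intro j
  induction j with
  | zero => intro _; simp [hz0]
  | succ j ih =>
    intro hj
    have hj' : j ≤ n := by omega
    rw [hzs j, ih (by omega), Finset.sum_range_succ', map_sum]
    congr 1
    · refine Finset.sum_congr rfl fun k _ => ?_
      have h1 : A' ((A' ^ k) (B' (w (n + 1 - j + k)))) = (A' ^ (k + 1)) (B' (w (n + 1 - j + k))) := by
        rw [pow_succ']; rfl
      have h2 : n + 1 - j + k = n + 1 - (j + 1) + (k + 1) := by omega
      rw [h1, h2]
    · have h3 : n + 1 - (j + 1) + 0 = n - j := by omega
      simp [h3]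

theorem statement8 (A : X →L[ℂ] X) (B : U →L[ℂ] X) (C : X →L[ℂ] Y) (D : U →L[ℂ] Y)
    (A₁ : X₁ →L[ℂ] X₁) (B₁ : U →L[ℂ] X₁) (C₁ : X₁ →L[ℂ] Y) (D₁ : U →L[ℂ] Y)
    (hpass : ‖sysOp A B C D‖ ≤ 1)
    (hiso : (ContinuousLinearMap.adjoint (sysOp A₁ B₁ C₁ D₁)).comp (sysOp A₁ B₁ C₁ D₁)
      = ContinuousLinearMap.id ℂ (WithLp 2 (X₁ × U)))
    (hD : D = D₁)
    (hmom : ∀ n : ℕ, C.comp ((A ^ n).comp B) = C₁.comp ((A₁ ^ n).comp B₁))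
    (n : ℕ) (u : Fin (n + 1) → U) :
    ‖∑ k : Fin (n + 1), (A ^ (k : ℕ)) (B (u k))‖
      ≤ ‖∑ k : Fin (n + 1), (A₁ ^ (k : ℕ)) (B₁ (u k))‖ := by
  classical
  -- extend the input family to ℕ
  set w : ℕ → U := fun k => if h : k < n + 1 then u ⟨k, h⟩ else 0 with hw
  -- trajectories with zero initial state, fed with inputs w n, w (n-1), ..., w 0
  set x : ℕ → X := fun j => Nat.rec 0 (fun j xj => A xj + B (w (n - j))) j with hxdef
  set x₁ : ℕ → X₁ := fun j => Nat.rec 0 (fun j xj => A₁ xj + B₁ (w (n - j))) j with hx₁def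
  have hx0 : x 0 = 0 := rfl
  have hxs : ∀ j, x (j + 1) = A (x j) + B (w (n - j)) := fun j => rfl
  have hx₁0 : x₁ 0 = 0 := rfl
  have hx₁s : ∀ j, x₁ (j + 1) = A₁ (x₁ j) + B₁ (w (n - j)) := fun j => rfl
  -- closed form of the states
  have hxfin : x (n + 1) = ∑ k ∈ Finset.range (n + 1), (A ^ k) (B (w k)) := by
    rw [key_sum A B w n x hx0 hxs (n + 1) le_rfl]
    refine Finset.sum_congr rfl fun k _ => ?_
    have : n + 1 - (n + 1) + k = k := by omega
    rw [this]
  have hx₁fin : x₁ (n + 1) = ∑ k ∈ Finset.range (n + 1), (A₁ ^ k) (B₁ (w k)) := by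
    rw [key_sum A₁ B₁ w n x₁ hx₁0 hx₁s (n + 1) le_rfl]
    refine Finset.sum_congr rfl fun k _ => ?_
    have : n + 1 - (n + 1) + k = k := by omega
    rw [this]
  -- moments applied pointwise
  have hmom' : ∀ (m : ℕ) (v : U), C ((A ^ m) (B v)) = C₁ ((A₁ ^ m) (B₁ v)) := by
    intro m v
    have := DFunLike.congr_fun (hmom m) v
    simpa using this
  -- equality of all "future outputs" of the two states
  have hCA : ∀ j m, C ((A ^ m) (x j)) = C₁ ((A₁ ^ m) (x₁ j)) := by
    intro j
    induction j with
    | zero => intro m; simp [hx0, hx₁0]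
    | succ j ih =>
      intro m
      rw [hxs, hx₁s, map_add, map_add, map_add, map_add]
      have h1 : C ((A ^ m) (A (x j))) = C₁ ((A₁ ^ m) (A₁ (x₁ j))) := by
        have := ih (m + 1)
        rw [pow_succ, pow_succ] at this
        simpa [mul_apply] using this
      rw [h1, hmom' m]
  -- the output sequence (equal for both systems)
  set y : ℕ → Y := fun j => C (x j) + D (w (n - j)) with hy
  have hyeq : ∀ j, C₁ (x₁ j) + D₁ (w (n - j)) = y j := by
    intro j
    rw [hy, hD]
    have := (hCA j 0).symm
    simp only [pow_zero] at this; change C₁ (x₁ j) = C (x j) at this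
    rw [this]
  -- energy estimates
  have hP : ∀ j, ‖x j‖ ^ 2 + ∑ i ∈ Finset.range j, ‖y i‖ ^ 2
      ≤ ∑ i ∈ Finset.range j, ‖w (n - i)‖ ^ 2 := by
    intro j
    induction j with
    | zero => simp [hx0]
    | succ j ih =>
      have hstep := passive_step A B C D hpass (x j) (w (n - j))
      rw [Finset.sum_range_succ, Finset.sum_range_succ, hxs]
      have hyj : y j = C (x j) + D (w (n - j)) := rfl
      rw [hyj] at *
      linarith
  have hQ : ∀ j, ‖x₁ j‖ ^ 2 + ∑ i ∈ Finset.range j, ‖y i‖ ^ 2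
      = ∑ i ∈ Finset.range j, ‖w (n - i)‖ ^ 2 := by
    intro j
    induction j with
    | zero => simp [hx₁0]
    | succ j ih =>
      have hstep := iso_step A₁ B₁ C₁ D₁ hiso (x₁ j) (w (n - j))
      rw [hyeq j] at hstep
      rw [Finset.sum_range_succ, Finset.sum_range_succ, hx₁s]
      linarith
  have h2 : ‖x (n + 1)‖ ^ 2 ≤ ‖x₁ (n + 1)‖ ^ 2 := by
    have hp := hP (n + 1)
    have hq := hQ (n + 1)
    linarith
  -- identify the goal sums with the states
  have hgoal1 : ∑ k : Fin (n + 1), (A ^ (k : ℕ)) (B (u k)) = x (n + 1) := by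
    rw [hxfin, Finset.sum_range]
    refine Finset.sum_congr rfl fun k _ => ?_
    have : w (k : ℕ) = u k := by simp only [hw]; rw [dif_pos k.isLt]
    rw [this]
  have hgoal2 : ∑ k : Fin (n + 1), (A₁ ^ (k : ℕ)) (B₁ (u k)) = x₁ (n + 1) := by
    rw [hx₁fin, Finset.sum_range]
    refine Finset.sum_congr rfl fun k _ => ?_
    have : w (k : ℕ) = u k := by simp only [hw]; rw [dif_pos k.isLt]
    rw [this]
  rw [hgoal1, hgoal2]
  have := Real.sqrt_le_sqrt h2
  rwa [Real.sqrt_sq (norm_nonneg _), Real.sqrt_sq (norm_nonneg _)] at this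

end
end

section
/- Suppose θ has an observable conservative realization on complex Hilbert spaces, i.e. a system Σ₁ = (A₁,B₁,C₁,D; X₁,U,Y) whose system operator is unitary and whose observable subspace equals X₁. Then every controllable passive realization Σ = (A,B,C,D; X,U,Y) of θ (same feedthrough D and same moments C∘Aⁿ∘B = C₁∘A₁ⁿ∘B₁ for all n ≥ 0) is isometric (its system operator T satisfies T*∘T = I) and minimal. -/
set_option linter.unusedSectionVars false
set_option maxHeartbeats 1000000



/-!
STATEMENT 18: If θ has an observable conservative realization Σ₁ (system operator
unitary, observable subspace equal to the whole state space), then every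
controllable passive realization Σ of θ is isometric (T*∘T = I) and minimal.
-/

noncomputable section

open ContinuousLinearMap

variable {X X₁ U Y : Type*}
  [NormedAddCommGroup X] [InnerProductSpace ℂ X] [CompleteSpace X]
  [NormedAddCommGroup X₁] [InnerProductSpace ℂ X₁] [CompleteSpace X₁]
  [NormedAddCommGroup U] [InnerProductSpace ℂ U] [CompleteSpace U]
  [NormedAddCommGroup Y] [InnerProductSpace ℂ Y] [CompleteSpace Y]

namespace Stmt18

variable {W W' V Z : Type*}
  [NormedAddCommGroup W] [InnerProductSpace ℂ W] [CompleteSpace W]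
  [NormedAddCommGroup W'] [InnerProductSpace ℂ W'] [CompleteSpace W']
  [NormedAddCommGroup V] [InnerProductSpace ℂ V] [CompleteSpace V]
  [NormedAddCommGroup Z] [InnerProductSpace ℂ Z] [CompleteSpace Z]


variable {W W' V Z : Type*}
  [NormedAddCommGroup W] [InnerProductSpace ℂ W] [CompleteSpace W]
  [NormedAddCommGroup W'] [InnerProductSpace ℂ W'] [CompleteSpace W']
  [NormedAddCommGroup V] [InnerProductSpace ℂ V] [CompleteSpace V]
  [NormedAddCommGroup Z] [InnerProductSpace ℂ Z] [CompleteSpace Z]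

def stS (A : W →L[ℂ] W) (B : V →L[ℂ] W) (f : ℕ → V) : ℕ → W
  | 0 => 0
  | n + 1 => A (stS A B f n) + B (f n)

lemma adjoint_pow (A : W →L[ℂ] W) (n : ℕ) : adjoint (A ^ n) = (adjoint A) ^ n := by
  induction n with
  | zero => simp [pow_zero, ContinuousLinearMap.one_def, adjoint_id]
  | succ n ih =>
      rw [pow_succ, pow_succ', ContinuousLinearMap.mul_def, ContinuousLinearMap.mul_def,
        adjoint_comp, ih]

lemma stS_congr (A : W →L[ℂ] W) (B : V →L[ℂ] W) {f g : ℕ → V} :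
    ∀ n, (∀ k, k < n → f k = g k) → stS A B f n = stS A B g n := by
  intro n
  induction n with
  | zero => intro _; rfl
  | succ n ih =>
      intro h
      simp only [stS, ih (fun k hk => h k (Nat.lt_succ_of_lt hk)), h n (Nat.lt_succ_self n)]

lemma stS_add (A : W →L[ℂ] W) (B : V →L[ℂ] W) (f g : ℕ → V) :
    ∀ n, stS A B (fun k => f k + g k) n = stS A B f n + stS A B g n := by
  intro n
  induction n with
  | zero => simp [stS]
  | succ n ih => simp only [stS, ih, map_add]; abel

lemma stS_sub (A : W →L[ℂ] W) (B : V →L[ℂ] W) (f g : ℕ → V) :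
    ∀ n, stS A B (fun k => f k - g k) n = stS A B f n - stS A B g n := by
  intro n
  induction n with
  | zero => simp [stS]
  | succ n ih => simp only [stS, ih, map_sub]; abel

lemma stS_smul (A : W →L[ℂ] W) (B : V →L[ℂ] W) (c : ℂ) (f : ℕ → V) :
    ∀ n, stS A B (fun k => c • f k) n = c • stS A B f n := by
  intro n
  induction n with
  | zero => simp [stS]
  | succ n ih => simp only [stS, ih, map_smul, smul_add]

lemma stS_zero_of (A : W →L[ℂ] W) (B : V →L[ℂ] W) {f : ℕ → V} :
    ∀ n, (∀ k, k < n → f k = 0) → stS A B f n = 0 := by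
  intro n
  induction n with
  | zero => intro _; rfl
  | succ n ih =>
      intro h
      simp only [stS, ih (fun k hk => h k (Nat.lt_succ_of_lt hk)), h n (Nat.lt_succ_self n),
        map_zero, add_zero]

def padF (j : ℕ) (f : ℕ → V) : ℕ → V := fun k => if k < j then 0 else f (k - j)

lemma stS_pad (A : W →L[ℂ] W) (B : V →L[ℂ] W) (f : ℕ → V) (j : ℕ) :
    ∀ n, stS A B (padF j f) (j + n) = stS A B f n := by
  intro n
  induction n with
  | zero =>
      exact stS_zero_of A B j (fun k hk => by simp [padF, hk])
  | succ n ih =>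
      have h : j + (n + 1) = (j + n) + 1 := rfl
      rw [h]
      show A (stS A B (padF j f) (j + n)) + B (padF j f (j + n)) = _
      rw [ih]
      have : padF j f (j + n) = f n := by
        simp [padF, Nat.add_sub_cancel_left]
      rw [this]
      rfl

def singF (u : V) : ℕ → V := fun k => if k = 0 then u else 0

lemma stS_sing (A : W →L[ℂ] W) (B : V →L[ℂ] W) (u : V) :
    ∀ n, stS A B (singF u) (n + 1) = (A ^ n) (B u) := by
  intro n
  induction n with
  | zero => simp [stS, singF]
  | succ n ih =>
      show A (stS A B (singF u) (n + 1)) + B (singF u (n + 1)) = _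
      rw [ih]
      simp [singF, pow_succ', ContinuousLinearMap.mul_def]

lemma mem_span_exists (A : W →L[ℂ] W) (B : V →L[ℂ] W) (z : W)
    (hz : z ∈ Submodule.span ℂ (⋃ n : ℕ, Set.range fun u : V => (A ^ n) (B u))) :
    ∃ f N, z = stS A B f N := by
  induction hz using Submodule.span_induction with
  | mem x hx =>
      obtain ⟨s, ⟨n, rfl⟩, hs⟩ := hx
      obtain ⟨u, rfl⟩ := hs
      exact ⟨singF u, n + 1, (stS_sing A B u n).symm⟩
  | zero => exact ⟨0, 0, rfl⟩
  | add x y _ _ hx hy =>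
      obtain ⟨f, n, rfl⟩ := hx
      obtain ⟨g, m, rfl⟩ := hy
      refine ⟨fun k => padF (max n m - n) f k + padF (max n m - m) g k, max n m, ?_⟩
      rw [stS_add]
      have h1 : max n m - n + n = max n m := Nat.sub_add_cancel (le_max_left n m)
      have h2 : max n m - m + m = max n m := Nat.sub_add_cancel (le_max_right n m)
      have e1 := stS_pad A B f (max n m - n) n
      have e2 := stS_pad A B g (max n m - m) m
      rw [h1] at e1
      rw [h2] at e2
      rw [e1, e2]
  | smul c x _ hx =>
      obtain ⟨f, n, rfl⟩ := hx
      exact ⟨fun k => c • f k, n, (stS_smul A B c f n).symm⟩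

lemma stS_sub_pair (A : W →L[ℂ] W) (B : V →L[ℂ] W) (f g : ℕ → V) (n m : ℕ) :
    stS A B f n - stS A B g m
      = stS A B (fun k => padF (max n m - n) f k - padF (max n m - m) g k) (max n m) := by
  rw [stS_sub]
  have h1 : max n m - n + n = max n m := Nat.sub_add_cancel (le_max_left n m)
  have h2 : max n m - m + m = max n m := Nat.sub_add_cancel (le_max_right n m)
  have e1 := stS_pad A B f (max n m - n) n
  have e2 := stS_pad A B g (max n m - m) m
  rw [h1] at e1
  rw [h2] at e2
  rw [e1, e2]

lemma outputs_eq (A : W →L[ℂ] W) (B : V →L[ℂ] W) (C : W →L[ℂ] Z)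
    (A' : W' →L[ℂ] W') (B' : V →L[ℂ] W') (C' : W' →L[ℂ] Z)
    (hm : ∀ (n : ℕ) (u : V), C ((A ^ n) (B u)) = C' ((A' ^ n) (B' u)))
    (f : ℕ → V) : ∀ n k, C ((A ^ k) (stS A B f n)) = C' ((A' ^ k) (stS A' B' f n)) := by
  intro n
  induction n with
  | zero => intro k; simp [stS]
  | succ n ih =>
      intro k
      show C ((A ^ k) (A (stS A B f n) + B (f n)))
        = C' ((A' ^ k) (A' (stS A' B' f n) + B' (f n)))
      have eA : (A ^ k) (A (stS A B f n)) = (A ^ (k + 1)) (stS A B f n) := by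
        rw [pow_succ]; rfl
      have eA' : (A' ^ k) (A' (stS A' B' f n)) = (A' ^ (k + 1)) (stS A' B' f n) := by
        rw [pow_succ]; rfl
      simp only [map_add, eA, eA']
      rw [ih (k + 1), hm k (f n)]

lemma sq_le_of_le {a b : ℝ} (hb : 0 ≤ b) (h : a ^ 2 ≤ b ^ 2) : a ≤ b := by nlinarith

lemma eq_of_sq_eq {a b : ℝ} (ha : 0 ≤ a) (hb : 0 ≤ b) (h : a ^ 2 = b ^ 2) : a = b := by
  nlinarith

lemma energy_mono (A : W →L[ℂ] W) (B : V →L[ℂ] W) (C : W →L[ℂ] Z) (D : V →L[ℂ] Z)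
    (A' : W' →L[ℂ] W') (B' : V →L[ℂ] W') (C' : W' →L[ℂ] Z)
    (hm : ∀ (n : ℕ) (u : V), C ((A ^ n) (B u)) = C' ((A' ^ n) (B' u)))
    (hp : ∀ (x : W) (u : V), ‖A x + B u‖ ^ 2 + ‖C x + D u‖ ^ 2 ≤ ‖x‖ ^ 2 + ‖u‖ ^ 2)
    (hc : ∀ (x : W') (u : V), ‖A' x + B' u‖ ^ 2 + ‖C' x + D u‖ ^ 2 = ‖x‖ ^ 2 + ‖u‖ ^ 2)
    (f : ℕ → V) : ∀ n, ‖stS A B f n‖ ^ 2 ≤ ‖stS A' B' f n‖ ^ 2 := by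
  intro n
  induction n with
  | zero => simp [stS]
  | succ n ih =>
      have hout := outputs_eq A B C A' B' C' hm f n 0
      simp only [pow_zero, ContinuousLinearMap.one_apply] at hout
      have h1 := hp (stS A B f n) (f n)
      have h2 := hc (stS A' B' f n) (f n)
      show ‖A (stS A B f n) + B (f n)‖ ^ 2 ≤ ‖A' (stS A' B' f n) + B' (f n)‖ ^ 2
      rw [hout] at h1
      nlinarith [sq_nonneg ‖C' (stS A' B' f n) + D (f n)‖]

lemma bridge (A : W →L[ℂ] W) (C : W →L[ℂ] Z)
    (A' : W' →L[ℂ] W') (C' : W' →L[ℂ] Z) (g : ℕ → Z) :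
    ∀ (m : ℕ) (x : W) (x' : W'), (∀ k, C ((A ^ k) x) = C' ((A' ^ k) x')) →
      (inner ℂ x (stS (adjoint A) (adjoint C) g m) : ℂ)
        = inner ℂ x' (stS (adjoint A') (adjoint C') g m) := by
  intro m
  induction m with
  | zero => intro x x' _; simp [stS]
  | succ m ih =>
      intro x x' h
      show (inner ℂ x ((adjoint A) (stS (adjoint A) (adjoint C) g m) + (adjoint C) (g m)) : ℂ)
        = inner ℂ x' ((adjoint A') (stS (adjoint A') (adjoint C') g m) + (adjoint C') (g m))
      rw [inner_add_right, inner_add_right, adjoint_inner_right, adjoint_inner_right,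
        adjoint_inner_right, adjoint_inner_right]
      have h0 : C x = C' x' := by simpa using h 0
      have hs : ∀ k, C ((A ^ k) (A x)) = C' ((A' ^ k) (A' x')) := by
        intro k
        have eA : (A ^ k) (A x) = (A ^ (k + 1)) x := by rw [pow_succ]; rfl
        have eA' : (A' ^ k) (A' x') = (A' ^ (k + 1)) x' := by rw [pow_succ]; rfl
        rw [eA, eA']
        exact h (k + 1)
      rw [ih (A x) (A' x') hs, h0]

end Stmt18

/-- The controllable subspace `X^c` of the system. -/
def contSub {W : Type*} [NormedAddCommGroup W] [InnerProductSpace ℂ W] [CompleteSpace W]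
    (A : W →L[ℂ] W) (B : U →L[ℂ] W) : Submodule ℂ W :=
  (Submodule.span ℂ (⋃ n : ℕ, Set.range fun u : U => (A ^ n) (B u))).topologicalClosure

/-- The observable subspace `X^o` of the system. -/
def obsSub {W : Type*} [NormedAddCommGroup W] [InnerProductSpace ℂ W] [CompleteSpace W]
    (A : W →L[ℂ] W) (C : W →L[ℂ] Y) : Submodule ℂ W :=
  (Submodule.span ℂ (⋃ n : ℕ, Set.range fun y : Y =>
    ((ContinuousLinearMap.adjoint A) ^ n) ((ContinuousLinearMap.adjoint C) y))).topologicalClosure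

namespace Stmt18

lemma withLp_norm_sq {E F : Type*} [NormedAddCommGroup E] [InnerProductSpace ℂ E]
    [NormedAddCommGroup F] [InnerProductSpace ℂ F] (a : E) (b : F) :
    ‖(WithLp.prodContinuousLinearEquiv 2 ℂ E F).symm (a, b)‖ ^ 2 = ‖a‖ ^ 2 + ‖b‖ ^ 2 := by
  rw [WithLp.prod_norm_sq_eq_of_L2]; rfl

lemma sysOp_apply_norm_sq {W : Type*} [NormedAddCommGroup W] [InnerProductSpace ℂ W]
    [CompleteSpace W] (A : W →L[ℂ] W) (B : U →L[ℂ] W) (C : W →L[ℂ] Y) (D : U →L[ℂ] Y)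
    (x : W) (u : U) :
    ‖sysOp A B C D ((WithLp.prodContinuousLinearEquiv 2 ℂ W U).symm (x, u))‖ ^ 2
      = ‖A x + B u‖ ^ 2 + ‖C x + D u‖ ^ 2 := by
  rw [WithLp.prod_norm_sq_eq_of_L2]; rfl

lemma sysOp_adjoint {W : Type*} [NormedAddCommGroup W] [InnerProductSpace ℂ W]
    [CompleteSpace W] (A : W →L[ℂ] W) (B : U →L[ℂ] W) (C : W →L[ℂ] Y) (D : U →L[ℂ] Y) :
    adjoint (sysOp A B C D)
      = sysOp (adjoint A) (adjoint C) (adjoint B) (adjoint D) := by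
  symm
  rw [eq_adjoint_iff]
  intro x y
  show (inner ℂ ((adjoint A) x.fst + (adjoint C) x.snd) y.fst : ℂ)
        + inner ℂ ((adjoint B) x.fst + (adjoint D) x.snd) y.snd
    = inner ℂ x.fst (A y.fst + B y.snd) + inner ℂ x.snd (C y.fst + D y.snd)
  simp only [adjoint_inner_left, inner_add_left, inner_add_right]
  ring

lemma passive_pt {W : Type*} [NormedAddCommGroup W] [InnerProductSpace ℂ W]
    [CompleteSpace W] (A : W →L[ℂ] W) (B : U →L[ℂ] W) (C : W →L[ℂ] Y) (D : U →L[ℂ] Y)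
    (h : ‖sysOp A B C D‖ ≤ 1) (x : W) (u : U) :
    ‖A x + B u‖ ^ 2 + ‖C x + D u‖ ^ 2 ≤ ‖x‖ ^ 2 + ‖u‖ ^ 2 := by
  set v := (WithLp.prodContinuousLinearEquiv 2 ℂ W U).symm (x, u) with hv
  have h1 : ‖sysOp A B C D v‖ ≤ ‖v‖ :=
    le_trans ((sysOp A B C D).le_opNorm v)
      (mul_le_of_le_one_left (norm_nonneg _) h)
  have h2 : ‖sysOp A B C D v‖ ^ 2 ≤ ‖v‖ ^ 2 :=
    pow_le_pow_left₀ (norm_nonneg _) h1 2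
  rw [sysOp_apply_norm_sq, withLp_norm_sq] at h2
  exact h2

lemma isometric_pt {W : Type*} [NormedAddCommGroup W] [InnerProductSpace ℂ W]
    [CompleteSpace W] (A : W →L[ℂ] W) (B : U →L[ℂ] W) (C : W →L[ℂ] Y) (D : U →L[ℂ] Y)
    (h : (adjoint (sysOp A B C D)).comp (sysOp A B C D)
        = ContinuousLinearMap.id ℂ (WithLp 2 (W × U))) (x : W) (u : U) :
    ‖A x + B u‖ ^ 2 + ‖C x + D u‖ ^ 2 = ‖x‖ ^ 2 + ‖u‖ ^ 2 := by
  have hn : ∀ v, ‖sysOp A B C D v‖ = ‖v‖ :=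
    (norm_map_iff_adjoint_comp_self (sysOp A B C D)).mpr
      (by rw [ContinuousLinearMap.one_def]; exact h)
  have h2 := hn ((WithLp.prodContinuousLinearEquiv 2 ℂ W U).symm (x, u))
  have h3 : ‖sysOp A B C D ((WithLp.prodContinuousLinearEquiv 2 ℂ W U).symm (x, u))‖ ^ 2
      = ‖(WithLp.prodContinuousLinearEquiv 2 ℂ W U).symm (x, u)‖ ^ 2 := by rw [h2]
  rw [sysOp_apply_norm_sq, withLp_norm_sq] at h3
  exact h3

end Stmt18

theorem statement18
    (A₁ : X₁ →L[ℂ] X₁) (B₁ : U →L[ℂ] X₁) (C₁ : X₁ →L[ℂ] Y) (D : U →L[ℂ] Y)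
    -- Σ₁ is conservative: its system operator is unitary
    (hcons₁ : (ContinuousLinearMap.adjoint (sysOp A₁ B₁ C₁ D)).comp (sysOp A₁ B₁ C₁ D)
        = ContinuousLinearMap.id ℂ (WithLp 2 (X₁ × U))
      ∧ (sysOp A₁ B₁ C₁ D).comp (ContinuousLinearMap.adjoint (sysOp A₁ B₁ C₁ D))
        = ContinuousLinearMap.id ℂ (WithLp 2 (X₁ × Y)))
    -- Σ₁ is observable
    (hobs₁ : obsSub A₁ C₁ = ⊤)
    -- Σ is a controllable passive realization of the same transfer function θ
    (A : X →L[ℂ] X) (B : U →L[ℂ] X) (C : X →L[ℂ] Y)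
    (hpass : ‖sysOp A B C D‖ ≤ 1)
    (hcont : contSub A B = ⊤)
    (hmom : ∀ n : ℕ, C.comp ((A ^ n).comp B) = C₁.comp ((A₁ ^ n).comp B₁)) :
    (ContinuousLinearMap.adjoint (sysOp A B C D)).comp (sysOp A B C D)
        = ContinuousLinearMap.id ℂ (WithLp 2 (X × U))
      ∧ contSub A B = ⊤ ∧ obsSub A C = ⊤ := by
  classical
  obtain ⟨hc1, hc2⟩ := hcons₁
  -- pointwise energy facts
  have hppt := Stmt18.passive_pt A B C D hpass
  have hcpt := Stmt18.isometric_pt A₁ B₁ C₁ D hc1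
  have hadjT : ContinuousLinearMap.adjoint (sysOp A B C D)
      = sysOp (ContinuousLinearMap.adjoint A) (ContinuousLinearMap.adjoint C)
          (ContinuousLinearMap.adjoint B) (ContinuousLinearMap.adjoint D) :=
    Stmt18.sysOp_adjoint A B C D
  have hadjT₁ : ContinuousLinearMap.adjoint (sysOp A₁ B₁ C₁ D)
      = sysOp (ContinuousLinearMap.adjoint A₁) (ContinuousLinearMap.adjoint C₁)
          (ContinuousLinearMap.adjoint B₁) (ContinuousLinearMap.adjoint D) :=
    Stmt18.sysOp_adjoint A₁ B₁ C₁ D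
  have hppt' : ∀ (x : X) (y : Y),
      ‖(ContinuousLinearMap.adjoint A) x + (ContinuousLinearMap.adjoint C) y‖ ^ 2
        + ‖(ContinuousLinearMap.adjoint B) x + (ContinuousLinearMap.adjoint D) y‖ ^ 2
        ≤ ‖x‖ ^ 2 + ‖y‖ ^ 2 := by
    apply Stmt18.passive_pt
    rw [← hadjT]
    calc ‖ContinuousLinearMap.adjoint (sysOp A B C D)‖ = ‖sysOp A B C D‖ :=
          ContinuousLinearMap.adjoint.norm_map _
      _ ≤ 1 := hpass
  have hcpt' : ∀ (x : X₁) (y : Y),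
      ‖(ContinuousLinearMap.adjoint A₁) x + (ContinuousLinearMap.adjoint C₁) y‖ ^ 2
        + ‖(ContinuousLinearMap.adjoint B₁) x + (ContinuousLinearMap.adjoint D) y‖ ^ 2
        = ‖x‖ ^ 2 + ‖y‖ ^ 2 := by
    apply Stmt18.isometric_pt
    rw [← hadjT₁, ContinuousLinearMap.adjoint_adjoint]
    exact hc2
  -- moments, pointwise
  have hmompt : ∀ (n : ℕ) (u : U), C ((A ^ n) (B u)) = C₁ ((A₁ ^ n) (B₁ u)) := by
    intro n u
    exact ContinuousLinearMap.ext_iff.mp (hmom n) u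
  have hmompt' : ∀ (n : ℕ) (y : Y),
      (ContinuousLinearMap.adjoint B) (((ContinuousLinearMap.adjoint A) ^ n)
        ((ContinuousLinearMap.adjoint C) y))
      = (ContinuousLinearMap.adjoint B₁) (((ContinuousLinearMap.adjoint A₁) ^ n)
        ((ContinuousLinearMap.adjoint C₁) y)) := by
    intro n y
    apply ext_inner_right ℂ
    intro u
    rw [ContinuousLinearMap.adjoint_inner_left, ContinuousLinearMap.adjoint_inner_left,
      ← Stmt18.adjoint_pow, ← Stmt18.adjoint_pow,
      ContinuousLinearMap.adjoint_inner_left, ContinuousLinearMap.adjoint_inner_left,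
      ContinuousLinearMap.adjoint_inner_left, ContinuousLinearMap.adjoint_inner_left,
      hmompt n u]
  have hout := Stmt18.outputs_eq A B C A₁ B₁ C₁ hmompt
  have hout' := Stmt18.outputs_eq (ContinuousLinearMap.adjoint A)
    (ContinuousLinearMap.adjoint C) (ContinuousLinearMap.adjoint B)
    (ContinuousLinearMap.adjoint A₁) (ContinuousLinearMap.adjoint C₁)
    (ContinuousLinearMap.adjoint B₁) hmompt'
  have hmono := Stmt18.energy_mono A B C D A₁ B₁ C₁ hmompt hppt hcpt
  have hmono' := Stmt18.energy_mono (ContinuousLinearMap.adjoint A)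
    (ContinuousLinearMap.adjoint C) (ContinuousLinearMap.adjoint B)
    (ContinuousLinearMap.adjoint D) (ContinuousLinearMap.adjoint A₁)
    (ContinuousLinearMap.adjoint C₁) (ContinuousLinearMap.adjoint B₁) hmompt' hppt' hcpt'
  -- density facts
  have hdense1 : Dense ((Submodule.span ℂ (⋃ n : ℕ, Set.range fun y : Y =>
      ((ContinuousLinearMap.adjoint A₁) ^ n) ((ContinuousLinearMap.adjoint C₁) y))
        : Submodule ℂ X₁) : Set X₁) := by
    rw [Submodule.dense_iff_topologicalClosure_eq_top]
    exact hobs₁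
  have hdense0 : Dense ((Submodule.span ℂ (⋃ n : ℕ, Set.range fun u : U =>
      (A ^ n) (B u)) : Submodule ℂ X) : Set X) := by
    rw [Submodule.dense_iff_topologicalClosure_eq_top]
    exact hcont
  -- the key norm equality between corresponding states
  have hiso : ∀ (f : ℕ → U) (n : ℕ), ‖Stmt18.stS A B f n‖ = ‖Stmt18.stS A₁ B₁ f n‖ := by
    intro f n
    have hle : ‖Stmt18.stS A B f n‖ ≤ ‖Stmt18.stS A₁ B₁ f n‖ :=
      Stmt18.sq_le_of_le (norm_nonneg _) (hmono f n)
    refine le_antisymm hle ?_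
    set z := Stmt18.stS A B f n with hz
    set z₁ := Stmt18.stS A₁ B₁ f n with hz₁
    rcases eq_or_ne z₁ 0 with h0 | h0
    · rw [h0, norm_zero]; exact norm_nonneg _
    obtain ⟨q, hqmem, hqlim⟩ := mem_closure_iff_seq_limit.mp (hdense1 z₁)
    choose g m hgm using fun j =>
      Stmt18.mem_span_exists (ContinuousLinearMap.adjoint A₁)
        (ContinuousLinearMap.adjoint C₁) (q j) (hqmem j)
    have hb : ∀ j, ‖(inner ℂ z₁ (q j) : ℂ)‖ ≤ ‖z‖ * ‖q j‖ := by
      intro j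
      rw [hgm j]
      rw [← Stmt18.bridge A C A₁ C₁ (g j) (m j) z z₁ (hout f n)]
      calc ‖(inner ℂ z (Stmt18.stS (ContinuousLinearMap.adjoint A)
              (ContinuousLinearMap.adjoint C) (g j) (m j)) : ℂ)‖
          ≤ ‖z‖ * ‖Stmt18.stS (ContinuousLinearMap.adjoint A)
              (ContinuousLinearMap.adjoint C) (g j) (m j)‖ := norm_inner_le_norm _ _
        _ ≤ ‖z‖ * ‖Stmt18.stS (ContinuousLinearMap.adjoint A₁)
              (ContinuousLinearMap.adjoint C₁) (g j) (m j)‖ :=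
            mul_le_mul_of_nonneg_left
              (Stmt18.sq_le_of_le (norm_nonneg _) (hmono' (g j) (m j))) (norm_nonneg _)
    have hlim1 : Filter.Tendsto (fun j => ‖(inner ℂ z₁ (q j) : ℂ)‖)
        Filter.atTop (nhds ‖(inner ℂ z₁ z₁ : ℂ)‖) :=
      ((Filter.Tendsto.inner tendsto_const_nhds hqlim)).norm
    have hlim2 : Filter.Tendsto (fun j => ‖z‖ * ‖q j‖) Filter.atTop (nhds (‖z‖ * ‖z₁‖)) :=
      hqlim.norm.const_mul _
    have hfin : ‖(inner ℂ z₁ z₁ : ℂ)‖ ≤ ‖z‖ * ‖z₁‖ :=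
      le_of_tendsto_of_tendsto' hlim1 hlim2 hb
    have hsq : ‖(inner ℂ z₁ z₁ : ℂ)‖ = ‖z₁‖ ^ 2 := by
      rw [inner_self_eq_norm_sq_to_K, norm_pow]
      simp
    rw [hsq] at hfin
    have hzpos : 0 < ‖z₁‖ := norm_pos_iff.mpr h0
    nlinarith
  -- the system operator of Σ is isometric
  have hTv : ∀ v : WithLp 2 (X × U), ‖sysOp A B C D v‖ = ‖v‖ := by
    have key : ∀ x : X, x ∈ Submodule.span ℂ (⋃ n : ℕ, Set.range fun u : U =>
        (A ^ n) (B u)) → ∀ u : U,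
        ‖sysOp A B C D ((WithLp.prodContinuousLinearEquiv 2 ℂ X U).symm (x, u))‖
          = ‖(WithLp.prodContinuousLinearEquiv 2 ℂ X U).symm (x, u)‖ := by
      intro x hx u
      obtain ⟨f, n, rfl⟩ := Stmt18.mem_span_exists A B x hx
      apply Stmt18.eq_of_sq_eq (norm_nonneg _) (norm_nonneg _)
      rw [Stmt18.sysOp_apply_norm_sq, Stmt18.withLp_norm_sq]
      set f' : ℕ → U := fun k => if k = n then u else f k with hf'
      have e1 : Stmt18.stS A B f' n = Stmt18.stS A B f n :=
        Stmt18.stS_congr A B n (fun k hk => if_neg (Nat.ne_of_lt hk))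
      have e1' : Stmt18.stS A₁ B₁ f' n = Stmt18.stS A₁ B₁ f n :=
        Stmt18.stS_congr A₁ B₁ n (fun k hk => if_neg (Nat.ne_of_lt hk))
      have e2 : A (Stmt18.stS A B f n) + B u = Stmt18.stS A B f' (n + 1) := by
        show _ = A (Stmt18.stS A B f' n) + B (f' n)
        rw [e1]
        simp [hf']
      have e2' : A₁ (Stmt18.stS A₁ B₁ f n) + B₁ u = Stmt18.stS A₁ B₁ f' (n + 1) := by
        show _ = A₁ (Stmt18.stS A₁ B₁ f' n) + B₁ (f' n)
        rw [e1']
        simp [hf']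
      have hCx : C (Stmt18.stS A B f n) = C₁ (Stmt18.stS A₁ B₁ f n) := by
        have := hout f n 0
        simpa using this
      rw [e2, hiso f' (n + 1), ← e2', hCx, hcpt _ u, hiso f n]
    intro v
    obtain ⟨q, hq, hql⟩ := mem_closure_iff_seq_limit.mp (hdense0 v.fst)
    have hveq : (WithLp.prodContinuousLinearEquiv 2 ℂ X U).symm (v.fst, v.snd) = v := rfl
    have hlim : Filter.Tendsto (fun j =>
        (WithLp.prodContinuousLinearEquiv 2 ℂ X U).symm (q j, v.snd))
        Filter.atTop (nhds v) := by
      have h1 : Filter.Tendsto (fun j => (q j, v.snd)) Filter.atTop (nhds (v.fst, v.snd)) :=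
        hql.prodMk_nhds tendsto_const_nhds
      have h2 := (((WithLp.prodContinuousLinearEquiv 2 ℂ X U).symm.continuous.tendsto
        (v.fst, v.snd)).comp h1)
      rw [hveq] at h2
      exact h2
    have heq : (fun j => ‖sysOp A B C D
        ((WithLp.prodContinuousLinearEquiv 2 ℂ X U).symm (q j, v.snd))‖)
        = fun j => ‖(WithLp.prodContinuousLinearEquiv 2 ℂ X U).symm (q j, v.snd)‖ :=
      funext fun j => key (q j) (hq j) v.snd
    have hL : Filter.Tendsto (fun j => ‖sysOp A B C D
        ((WithLp.prodContinuousLinearEquiv 2 ℂ X U).symm (q j, v.snd))‖)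
        Filter.atTop (nhds ‖sysOp A B C D v‖) :=
      (((sysOp A B C D).continuous.tendsto v).comp hlim).norm
    have hR : Filter.Tendsto (fun j =>
        ‖(WithLp.prodContinuousLinearEquiv 2 ℂ X U).symm (q j, v.snd)‖)
        Filter.atTop (nhds ‖v‖) := hlim.norm
    rw [heq] at hL
    exact tendsto_nhds_unique hL hR
  refine ⟨?_, hcont, ?_⟩
  · rw [← ContinuousLinearMap.one_def]
    exact (ContinuousLinearMap.norm_map_iff_adjoint_comp_self (sysOp A B C D)).mp hTv
  -- observability
  · rw [obsSub, Submodule.topologicalClosure_eq_top_iff, Submodule.eq_bot_iff]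
    intro x hx
    have hCx : ∀ k : ℕ, C ((A ^ k) x) = 0 := by
      intro k
      have hy : ∀ y : Y, (inner ℂ y (C ((A ^ k) x)) : ℂ) = 0 := by
        intro y
        have hmem : ((ContinuousLinearMap.adjoint A) ^ k)
            ((ContinuousLinearMap.adjoint C) y) ∈ Submodule.span ℂ
            (⋃ n : ℕ, Set.range fun y : Y =>
              ((ContinuousLinearMap.adjoint A) ^ n) ((ContinuousLinearMap.adjoint C) y)) :=
          Submodule.subset_span (Set.mem_iUnion.mpr ⟨k, Set.mem_range_self y⟩)
        have h0 := (Submodule.mem_orthogonal _ x).mp hx _ hmem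
        rw [← Stmt18.adjoint_pow, ContinuousLinearMap.adjoint_inner_left,
          ContinuousLinearMap.adjoint_inner_left] at h0
        exact h0
      have := hy (C ((A ^ k) x))
      rwa [inner_self_eq_zero] at this
    obtain ⟨q, hq, hql⟩ := mem_closure_iff_seq_limit.mp (hdense0 x)
    choose f n hfn using fun j => Stmt18.mem_span_exists A B (q j) (hq j)
    set w : ℕ → X₁ := fun j => Stmt18.stS A₁ B₁ (f j) (n j) with hw
    have hdist : ∀ i j, ‖w i - w j‖ = ‖q i - q j‖ := by
      intro i j
      rw [hfn i, hfn j, Stmt18.stS_sub_pair A B, hw]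
      show ‖Stmt18.stS A₁ B₁ (f i) (n i) - Stmt18.stS A₁ B₁ (f j) (n j)‖ = _
      rw [Stmt18.stS_sub_pair A₁ B₁]
      exact (hiso _ _).symm
    have hcauchy : CauchySeq w := by
      have hq' : CauchySeq q := hql.cauchySeq
      rw [Metric.cauchySeq_iff] at hq' ⊢
      intro ε hε
      obtain ⟨N, hN⟩ := hq' ε hε
      refine ⟨N, fun i hi j hj => ?_⟩
      rw [dist_eq_norm, hdist]
      rw [← dist_eq_norm]
      exact hN i hi j hj
    obtain ⟨wl, hwl⟩ := cauchySeq_tendsto_of_complete hcauchy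
    have hnx : ‖x‖ = ‖wl‖ := by
      have h1 : Filter.Tendsto (fun j => ‖q j‖) Filter.atTop (nhds ‖x‖) := hql.norm
      have h2 : Filter.Tendsto (fun j => ‖w j‖) Filter.atTop (nhds ‖wl‖) := hwl.norm
      have heq : (fun j => ‖q j‖) = fun j => ‖w j‖ := by
        funext j
        rw [hfn j, hw]
        exact hiso (f j) (n j)
      rw [heq] at h1
      exact tendsto_nhds_unique h1 h2
    have hwl0 : wl = 0 := by
      have hperp : ∀ (k : ℕ) (y : Y),
          (inner ℂ wl (((ContinuousLinearMap.adjoint A₁) ^ k)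
            ((ContinuousLinearMap.adjoint C₁) y)) : ℂ) = 0 := by
        intro k y
        rw [← Stmt18.stS_sing (ContinuousLinearMap.adjoint A₁)
          (ContinuousLinearMap.adjoint C₁) y k]
        have hj : ∀ j, (inner ℂ (w j) (Stmt18.stS (ContinuousLinearMap.adjoint A₁)
            (ContinuousLinearMap.adjoint C₁) (Stmt18.singF y) (k + 1)) : ℂ)
            = inner ℂ (q j) (Stmt18.stS (ContinuousLinearMap.adjoint A)
              (ContinuousLinearMap.adjoint C) (Stmt18.singF y) (k + 1)) := by
          intro j
          rw [hfn j, hw]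
          exact (Stmt18.bridge A C A₁ C₁ (Stmt18.singF y) (k + 1) _ _
            (hout (f j) (n j))).symm
        have hlimL : Filter.Tendsto (fun j => (inner ℂ (w j)
            (Stmt18.stS (ContinuousLinearMap.adjoint A₁)
              (ContinuousLinearMap.adjoint C₁) (Stmt18.singF y) (k + 1)) : ℂ))
            Filter.atTop (nhds (inner ℂ wl (Stmt18.stS (ContinuousLinearMap.adjoint A₁)
              (ContinuousLinearMap.adjoint C₁) (Stmt18.singF y) (k + 1)))) :=
          Filter.Tendsto.inner hwl tendsto_const_nhds
        have hlimR : Filter.Tendsto (fun j => (inner ℂ (q j)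
            (Stmt18.stS (ContinuousLinearMap.adjoint A)
              (ContinuousLinearMap.adjoint C) (Stmt18.singF y) (k + 1)) : ℂ))
            Filter.atTop (nhds (inner ℂ x (Stmt18.stS (ContinuousLinearMap.adjoint A)
              (ContinuousLinearMap.adjoint C) (Stmt18.singF y) (k + 1)))) :=
          Filter.Tendsto.inner hql tendsto_const_nhds
        have heq2 : (inner ℂ wl (Stmt18.stS (ContinuousLinearMap.adjoint A₁)
            (ContinuousLinearMap.adjoint C₁) (Stmt18.singF y) (k + 1)) : ℂ)
            = inner ℂ x (Stmt18.stS (ContinuousLinearMap.adjoint A)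
              (ContinuousLinearMap.adjoint C) (Stmt18.singF y) (k + 1)) := by
          refine tendsto_nhds_unique ?_ hlimR
          have hfeq : (fun j => (inner ℂ (w j) (Stmt18.stS (ContinuousLinearMap.adjoint A₁)
              (ContinuousLinearMap.adjoint C₁) (Stmt18.singF y) (k + 1)) : ℂ))
              = fun j => (inner ℂ (q j) (Stmt18.stS (ContinuousLinearMap.adjoint A)
                (ContinuousLinearMap.adjoint C) (Stmt18.singF y) (k + 1)) : ℂ) :=
            funext hj
          rw [← hfeq]
          exact hlimL
        have hx0 : (inner ℂ x (Stmt18.stS (ContinuousLinearMap.adjoint A)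
            (ContinuousLinearMap.adjoint C) (Stmt18.singF y) (k + 1)) : ℂ) = 0 := by
          have hb := Stmt18.bridge A C A₁ C₁ (Stmt18.singF y) (k + 1) x (0 : X₁)
            (fun k => by rw [hCx k, map_zero, map_zero])
          simpa using hb
        rw [heq2, hx0]
      have hmem : wl ∈ (Submodule.span ℂ (⋃ n : ℕ, Set.range fun y : Y =>
          ((ContinuousLinearMap.adjoint A₁) ^ n) ((ContinuousLinearMap.adjoint C₁) y)))ᗮ := by
        rw [Submodule.mem_orthogonal]
        intro v hv
        induction hv using Submodule.span_induction with
        | mem v hv =>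
            obtain ⟨s, ⟨k, rfl⟩, y, rfl⟩ := hv
            rw [← inner_conj_symm, hperp k y, map_zero]
        | zero => simp
        | add a b _ _ ha hb => rw [inner_add_left, ha, hb, add_zero]
        | smul c a _ ha => rw [inner_smul_left, ha, mul_zero]
      have hbot := Submodule.topologicalClosure_eq_top_iff.mp hobs₁
      rw [hbot] at hmem
      exact hmem
    rw [hwl0, norm_zero] at hnx
    exact norm_eq_zero.mp hnx

end
end
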